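/- Let SP_9 be the 2-edge-coloured complete graph on vertex set {0,...,8} where the positive edges form a copy of K_3 □ K_3 and all other edges are negative. Then SP_9 is isomorphic (as a 2-edge-coloured graph) to the 2-edge-coloured graph obtained from SP_9 by switching the sign of every edge. -/
import Mathlib


/-- Vertices of `SP_9`, identified with `{0,1,2} × {0,1,2}`. -/
abbrev V9 : Type := Fin 3 × Fin 3

/-- The edge `uv` of `SP_9` is positive: `u ≠ v` and they agree in exactly one coordinate. -/
abbrev pos9 (u v : V9) : Prop :=
  (u.1 = v.1 ∧ u.2 ≠ v.2) ∨ (u.1 ≠ v.1 ∧ u.2 = v.2)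

/-- The edge `uv` of `SP_9` is negative: `u ≠ v` and it is not positive. -/
abbrev neg9 (u v : V9) : Prop := u ≠ v ∧ ¬ pos9 u v

/-- `SP_9` is isomorphic, as a 2-edge-coloured complete graph, to the
2-edge-coloured graph obtained from it by switching the sign of every edge:
there is a permutation of the vertices sending positive edges exactly to
negative edges. -/
theorem sp9_iso_switch :
    ∃ φ : V9 ≃ V9, ∀ u v : V9, u ≠ v → (pos9 u v ↔ ¬ pos9 (φ u) (φ v)) := by
  refine ⟨⟨fun p => (p.1 + p.2, p.1 - p.2), fun p => (2 * (p.1 + p.2), 2 * (p.1 - p.2)),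
    by decide, by decide⟩, by decide⟩
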